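/- Let Λ = diag(λ₁,…,λₙ) with all λᵢ > 0, and let f : ℝⁿ → [0,1] be measurable. Define the smoothed function g_Λ(x) = E_{ε ~ U[−1,1]ⁿ}[f(x + Λε)], where U[−1,1]ⁿ is the uniform distribution on the cube [−1,1]ⁿ. Then |g_Λ(x) − g_Λ(y)| ≤ (1/2) ‖Λ⁻¹(x − y)‖₁ for all x, y ∈ ℝⁿ; i.e., g_Λ is (1/2)-Lipschitz with respect to the norm ‖δ‖_{Λ,1} := ‖Λ⁻¹δ‖₁. -/

import Mathlib

open MeasureTheory

section Aux

variable {n : ℕ}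

private lemma cube_vol_ne_top (u : Fin n → Set ℝ) (h : ∀ i, volume (u i) ≠ ⊤) :
    volume (Set.univ.pi u) ≠ ⊤ := by
  rw [volume_pi_pi]
  exact (ENNReal.prod_lt_top (fun i _ => (h i).lt_top)).ne

private lemma meas_shift (lam a : Fin n → ℝ) :
    Measurable (fun ε : Fin n → ℝ => a + fun i => lam i * ε i) := by
  apply measurable_pi_lambda
  intro i
  have : (fun ε : Fin n → ℝ => (a + fun j => lam j * ε j) i)
      = fun ε : Fin n → ℝ => a i + lam i * ε i := rfl
  rw [this]
  exact measurable_const.add (measurable_const.mul (measurable_pi_apply i))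

private lemma intOn (lam : Fin n → ℝ) {f : (Fin n → ℝ) → ℝ} (hf : Measurable f)
    (hf01 : ∀ v, f v ∈ Set.Icc (0:ℝ) 1)
    (a : Fin n → ℝ) (S : Set (Fin n → ℝ)) (hfin : volume S ≠ ⊤) :
    IntegrableOn (fun ε : Fin n → ℝ => f (a + fun i => lam i * ε i)) S := by
  apply Measure.integrableOn_of_bounded hfin ((hf.comp (meas_shift lam a)).aestronglyMeasurable)
    (M := 1)
  filter_upwards with ε
  simp only [Function.comp_apply]
  have h := hf01 (a + fun i => lam i * ε i)
  rw [Real.norm_eq_abs, abs_le]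
  exact ⟨by linarith [h.1], h.2⟩

-- translation step
private lemma translate_integral (g : (Fin n → ℝ) → ℝ)
    (i₀ : Fin n) (c : ℝ) :
    (∫ ε in Set.univ.pi (fun _ : Fin n => Set.Icc (-1 : ℝ) 1), g (ε + Pi.single i₀ c))
      = ∫ u in Set.univ.pi
          (Function.update (fun _ : Fin n => Set.Icc (-1 : ℝ) 1) i₀ (Set.Icc (-1 + c) (1 + c))),
        g u := by
  set C : Set (Fin n → ℝ) := Set.univ.pi (fun _ : Fin n => Set.Icc (-1 : ℝ) 1) with hCdef
  set C' : Set (Fin n → ℝ) := Set.univ.pi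
      (Function.update (fun _ : Fin n => Set.Icc (-1 : ℝ) 1) i₀ (Set.Icc (-1 + c) (1 + c))) with hC'def
  have hC : MeasurableSet C := MeasurableSet.univ_pi (fun _ => measurableSet_Icc)
  have hC' : MeasurableSet C' := by
    apply MeasurableSet.univ_pi
    intro i
    rcases eq_or_ne i i₀ with h | h
    · subst h; rw [Function.update_self]; exact measurableSet_Icc
    · rw [Function.update_of_ne h]; exact measurableSet_Icc
  have hmem : ∀ ε : Fin n → ℝ, ε ∈ C ↔ ε + Pi.single i₀ c ∈ C' := by
    intro ε
    simp only [hCdef, hC'def, Set.mem_pi, Set.mem_univ, forall_true_left, true_implies]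
    constructor
    · intro h j
      by_cases hj : j = i₀
      · subst hj
        simp only [Pi.add_apply, Pi.single_eq_same, Function.update_self]
        have := h j
        simp only [Set.mem_Icc] at *
        constructor <;> linarith [this.1, this.2]
      · simpa [Pi.single_eq_of_ne hj, Function.update_of_ne hj] using h j
    · intro h j
      by_cases hj : j = i₀
      · subst hj
        have := h j
        simp only [Pi.add_apply, Pi.single_eq_same, Function.update_self, Set.mem_Icc] at this ⊢
        constructor <;> linarith [this.1, this.2]
      · have := h j
        simpa [Pi.single_eq_of_ne hj, Function.update_of_ne hj] using this
  rw [← integral_indicator hC, ← integral_indicator hC',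
    ← integral_add_right_eq_self (C'.indicator g) (Pi.single i₀ c)]
  apply congrArg
  funext ε
  by_cases h : ε ∈ C
  · rw [Set.indicator_of_mem h, Set.indicator_of_mem ((hmem ε).mp h)]
  · rw [Set.indicator_of_notMem h,
      Set.indicator_of_notMem (fun hc => h ((hmem ε).mpr hc))]


private lemma vol_slab (i₀ : Fin n) (K : Set ℝ) (b : ℝ) (hb : 0 ≤ b)
    (hKv : volume K ≤ ENNReal.ofReal b) :
    (volume (Set.univ.pi (Function.update (fun _ : Fin n => Set.Icc (-1:ℝ) 1) i₀ K))).toReal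
      ≤ 2 ^ (n - 1) * b := by
  apply ENNReal.toReal_le_of_le_ofReal (by positivity)
  rw [volume_pi_pi]
  have hup : (fun i : Fin n => volume (Function.update (fun _ : Fin n => Set.Icc (-1:ℝ) 1) i₀ K i))
      = Function.update (fun _ : Fin n => volume (Set.Icc (-1:ℝ) 1)) i₀ (volume K) :=
    funext fun i => Function.apply_update (fun _ s => volume s) _ i₀ K i
  calc ∏ i : Fin n, volume (Function.update (fun _ : Fin n => Set.Icc (-1:ℝ) 1) i₀ K i)
      = ∏ i : Fin n, Function.update (fun _ : Fin n => volume (Set.Icc (-1:ℝ) 1)) i₀ (volume K) i := by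
        rw [hup]
    _ = _ := Finset.prod_update_of_mem (Finset.mem_univ i₀) _ _
  have h2 : ∀ j : Fin n, volume (Set.Icc (-1:ℝ) 1) = ENNReal.ofReal 2 := by
    intro j; rw [Real.volume_Icc]; norm_num
  have hcard : (Finset.univ \ {i₀} : Finset (Fin n)).card = n - 1 := by
    rw [Finset.sdiff_singleton_eq_erase, Finset.card_erase_of_mem (Finset.mem_univ i₀),
      Finset.card_univ, Fintype.card_fin]
  rw [Finset.prod_const, hcard, Real.volume_Icc]
  norm_num
  calc volume K * (2:ENNReal) ^ (n - 1)
      ≤ ENNReal.ofReal b * (2:ENNReal) ^ (n - 1) := mul_le_mul_left hKv _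
    _ = ENNReal.ofReal (2 ^ (n - 1) * b) := by
        rw [ENNReal.ofReal_mul (by positivity), ENNReal.ofReal_pow (by norm_num : (0:ℝ) ≤ 2),
          mul_comm]
        norm_num
  rw [ENNReal.ofReal_mul (by positivity), ENNReal.ofReal_pow (by norm_num : (0:ℝ) ≤ 2)]
  norm_num

private lemma diff_subset₁ (i₀ : Fin n) (J K : Set ℝ)
    (h : ∀ t : ℝ, t ∈ J → t ∉ Set.Icc (-1:ℝ) 1 → t ∈ K) :
    Set.univ.pi (Function.update (fun _ : Fin n => Set.Icc (-1:ℝ) 1) i₀ J) \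
        Set.univ.pi (fun _ : Fin n => Set.Icc (-1:ℝ) 1)
      ⊆ Set.univ.pi (Function.update (fun _ : Fin n => Set.Icc (-1:ℝ) 1) i₀ K) := by
  rintro u ⟨hu1, hu2⟩
  simp only [Set.mem_pi, Set.mem_univ, true_implies] at hu1 hu2 ⊢
  push_neg at hu2
  obtain ⟨j, hj⟩ := hu2
  have hji : j = i₀ := by
    by_contra hne
    exact hj (by simpa [Function.update_of_ne hne] using hu1 j)
  subst hji
  intro k
  rcases eq_or_ne k j with rfl | hk
  · have := hu1 k
    rw [Function.update_self] at this
    rw [Function.update_self]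
    exact h _ this hj
  · have := hu1 k
    rw [Function.update_of_ne hk] at this
    rw [Function.update_of_ne hk]
    exact this

private lemma diff_subset₂ (i₀ : Fin n) (J K : Set ℝ)
    (h : ∀ t : ℝ, t ∈ Set.Icc (-1:ℝ) 1 → t ∉ J → t ∈ K) :
    Set.univ.pi (fun _ : Fin n => Set.Icc (-1:ℝ) 1) \
        Set.univ.pi (Function.update (fun _ : Fin n => Set.Icc (-1:ℝ) 1) i₀ J)
      ⊆ Set.univ.pi (Function.update (fun _ : Fin n => Set.Icc (-1:ℝ) 1) i₀ K) := by
  rintro u ⟨hu1, hu2⟩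
  simp only [Set.mem_pi, Set.mem_univ, true_implies] at hu1 hu2 ⊢
  push_neg at hu2
  obtain ⟨j, hj⟩ := hu2
  have hji : j = i₀ := by
    by_contra hne
    rw [Function.update_of_ne hne] at hj
    exact hj (hu1 j)
  subst hji
  rw [Function.update_self] at hj
  intro k
  rcases eq_or_ne k j with rfl | hk
  · rw [Function.update_self]
    exact h _ (hu1 k) hj
  · rw [Function.update_of_ne hk]
    exact hu1 k



private lemma step_bound {lam : Fin n → ℝ}
    {f : (Fin n → ℝ) → ℝ} (hf : Measurable f) (hf01 : ∀ v, f v ∈ Set.Icc (0:ℝ) 1)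
    (a : Fin n → ℝ) (i₀ : Fin n) (c : ℝ) :
    |(∫ ε in Set.univ.pi (fun _ : Fin n => Set.Icc (-1 : ℝ) 1),
        f (Function.update a i₀ (a i₀ + lam i₀ * c) + fun i => lam i * ε i)) -
      ∫ ε in Set.univ.pi (fun _ : Fin n => Set.Icc (-1 : ℝ) 1),
        f (a + fun i => lam i * ε i)| ≤ 2 ^ (n - 1) * |c| := by
  set C : Set (Fin n → ℝ) := Set.univ.pi (fun _ : Fin n => Set.Icc (-1 : ℝ) 1) with hCdef
  set C' : Set (Fin n → ℝ) := Set.univ.pi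
      (Function.update (fun _ : Fin n => Set.Icc (-1 : ℝ) 1) i₀ (Set.Icc (-1 + c) (1 + c)))
      with hC'def
  set g : (Fin n → ℝ) → ℝ := fun ε => f (a + fun i => lam i * ε i) with hgdef
  have hC : MeasurableSet C := MeasurableSet.univ_pi (fun _ => measurableSet_Icc)
  have hC' : MeasurableSet C' := by
    apply MeasurableSet.univ_pi
    intro i
    rcases eq_or_ne i i₀ with h | h
    · subst h; rw [Function.update_self]; exact measurableSet_Icc
    · rw [Function.update_of_ne h]; exact measurableSet_Icc
  have hCfin : volume C ≠ ⊤ := cube_vol_ne_top _ (fun i => by rw [Real.volume_Icc]; simp)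
  have hC'fin : volume C' ≠ ⊤ := by
    apply cube_vol_ne_top
    intro i
    rcases eq_or_ne i i₀ with h | h
    · subst h; rw [Function.update_self, Real.volume_Icc]; simp
    · rw [Function.update_of_ne h, Real.volume_Icc]; simp
  -- rewrite the first integral
  have hpt : ∀ ε : Fin n → ℝ,
      f (Function.update a i₀ (a i₀ + lam i₀ * c) + fun i => lam i * ε i)
        = g (ε + Pi.single i₀ c) := by
    intro ε
    rw [hgdef]
    apply congrArg
    funext j
    rcases eq_or_ne j i₀ with rfl | hj
    · simp only [Pi.add_apply, Function.update_self, Pi.single_eq_same]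
      ring
    · simp only [Pi.add_apply, Function.update_of_ne hj, Pi.single_eq_of_ne hj]
      ring
  have hint1 : (∫ ε in C, f (Function.update a i₀ (a i₀ + lam i₀ * c) + fun i => lam i * ε i))
      = ∫ u in C', g u := by
    rw [show (fun ε : Fin n → ℝ =>
        f (Function.update a i₀ (a i₀ + lam i₀ * c) + fun i => lam i * ε i))
      = fun ε => g (ε + Pi.single i₀ c) from funext hpt]
    exact translate_integral g i₀ c
  rw [hint1]
  -- integrability
  have hIC : IntegrableOn g C := intOn lam hf hf01 a C hCfin
  have hIC' : IntegrableOn g C' := intOn lam hf hf01 a C' hC'fin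
  -- decompose
  have h1 := integral_inter_add_diff (μ := volume) (f := g) (s := C') (t := C) hC hIC'
  have h2 := integral_inter_add_diff (μ := volume) (f := g) (s := C) (t := C') hC' hIC
  rw [Set.inter_comm] at h1
  have hdec : (∫ u in C', g u) - ∫ ε in C, g ε
      = (∫ u in C' \ C, g u) - ∫ u in C \ C', g u := by linarith
  rw [hdec]
  -- bounds on the two pieces
  have hg_nonneg : ∀ u, 0 ≤ g u := fun u => (hf01 _).1
  have key : ∀ S : Set (Fin n → ℝ), MeasurableSet S → volume S ≠ ⊤ →
      (volume S).toReal ≤ 2 ^ (n - 1) * |c| →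
      (0 ≤ ∫ u in S, g u) ∧ (∫ u in S, g u) ≤ 2 ^ (n - 1) * |c| := by
    intro S hS hSfin hSv
    constructor
    · exact setIntegral_nonneg hS (fun u _ => hg_nonneg u)
    · have hb : ‖∫ u in S, g u‖ ≤ 1 * (volume S).toReal := by
        apply norm_setIntegral_le_of_norm_le_const hSfin.lt_top
        · intro u _
          rw [Real.norm_eq_abs, abs_le]
          exact ⟨by linarith [(hf01 (a + fun i => lam i * u i)).1],
            (hf01 (a + fun i => lam i * u i)).2⟩
      rw [Real.norm_eq_abs] at hb
      calc (∫ u in S, g u) ≤ |∫ u in S, g u| := le_abs_self _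
        _ ≤ 1 * (volume S).toReal := hb
        _ = (volume S).toReal := one_mul _
        _ ≤ 2 ^ (n - 1) * |c| := hSv
  -- measure bounds via slabs
  have habs : 0 ≤ |c| := abs_nonneg c
  have hmeas1 : (volume (C' \ C)).toReal ≤ 2 ^ (n - 1) * |c| ∧
      (volume (C \ C')).toReal ≤ 2 ^ (n - 1) * |c| := by
    rcases le_or_gt 0 c with hc | hc
    · constructor
      · have hsub : C' \ C ⊆ Set.univ.pi
            (Function.update (fun _ : Fin n => Set.Icc (-1:ℝ) 1) i₀ (Set.Icc 1 (1 + c))) := by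
          apply diff_subset₁
          intro t ht hnt
          simp only [Set.mem_Icc, not_and_or, not_le] at ht hnt ⊢
          rcases hnt with h | h
          · exact absurd ht.1 (by intro hh; linarith)
          · exact ⟨le_of_lt h, ht.2⟩
        refine le_trans (ENNReal.toReal_mono ?_ (measure_mono hsub)) ?_
        · apply cube_vol_ne_top
          intro i
          rcases eq_or_ne i i₀ with h | h
          · subst h; rw [Function.update_self, Real.volume_Icc]; simp
          · rw [Function.update_of_ne h, Real.volume_Icc]; simp
        · apply vol_slab i₀ _ _ habs
          rw [Real.volume_Icc, abs_of_nonneg hc]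
          apply ENNReal.ofReal_le_ofReal; linarith
      · have hsub : C \ C' ⊆ Set.univ.pi
            (Function.update (fun _ : Fin n => Set.Icc (-1:ℝ) 1) i₀ (Set.Icc (-1) (-1 + c))) := by
          apply diff_subset₂
          intro t ht hnt
          simp only [Set.mem_Icc, not_and_or, not_le] at ht hnt ⊢
          rcases hnt with h | h
          · exact ⟨ht.1, by linarith⟩
          · exact absurd ht.2 (by intro hh; linarith)
        refine le_trans (ENNReal.toReal_mono ?_ (measure_mono hsub)) ?_
        · apply cube_vol_ne_top
          intro i
          rcases eq_or_ne i i₀ with h | h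
          · subst h; rw [Function.update_self, Real.volume_Icc]; simp
          · rw [Function.update_of_ne h, Real.volume_Icc]; simp
        · apply vol_slab i₀ _ _ habs
          rw [Real.volume_Icc, abs_of_nonneg hc]
          apply ENNReal.ofReal_le_ofReal; linarith
    · constructor
      · have hsub : C' \ C ⊆ Set.univ.pi
            (Function.update (fun _ : Fin n => Set.Icc (-1:ℝ) 1) i₀ (Set.Icc (-1 + c) (-1))) := by
          apply diff_subset₁
          intro t ht hnt
          simp only [Set.mem_Icc, not_and_or, not_le] at ht hnt ⊢
          rcases hnt with h | h
          · exact ⟨ht.1, le_of_lt h⟩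
          · exact absurd ht.2 (by intro hh; linarith)
        refine le_trans (ENNReal.toReal_mono ?_ (measure_mono hsub)) ?_
        · apply cube_vol_ne_top
          intro i
          rcases eq_or_ne i i₀ with h | h
          · subst h; rw [Function.update_self, Real.volume_Icc]; simp
          · rw [Function.update_of_ne h, Real.volume_Icc]; simp
        · apply vol_slab i₀ _ _ habs
          rw [Real.volume_Icc, abs_of_neg hc]
          apply ENNReal.ofReal_le_ofReal; linarith
      · have hsub : C \ C' ⊆ Set.univ.pi
            (Function.update (fun _ : Fin n => Set.Icc (-1:ℝ) 1) i₀ (Set.Icc (1 + c) 1)) := by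
          apply diff_subset₂
          intro t ht hnt
          simp only [Set.mem_Icc, not_and_or, not_le] at ht hnt ⊢
          rcases hnt with h | h
          · exact absurd ht.1 (by intro hh; linarith)
          · exact ⟨by linarith, ht.2⟩
        refine le_trans (ENNReal.toReal_mono ?_ (measure_mono hsub)) ?_
        · apply cube_vol_ne_top
          intro i
          rcases eq_or_ne i i₀ with h | h
          · subst h; rw [Function.update_self, Real.volume_Icc]; simp
          · rw [Function.update_of_ne h, Real.volume_Icc]; simp
        · apply vol_slab i₀ _ _ habs
          rw [Real.volume_Icc, abs_of_neg hc]
          apply ENNReal.ofReal_le_ofReal; linarith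
  have hfin1 : volume (C' \ C) ≠ ⊤ :=
    ne_top_of_le_ne_top hC'fin (measure_mono Set.diff_subset)
  have hfin2 : volume (C \ C') ≠ ⊤ :=
    ne_top_of_le_ne_top hCfin (measure_mono Set.diff_subset)
  obtain ⟨hA1, hA2⟩ := key (C' \ C) (hC'.diff hC) hfin1 hmeas1.1
  obtain ⟨hB1, hB2⟩ := key (C \ C') (hC.diff hC') hfin2 hmeas1.2
  rw [abs_le]
  constructor <;> linarith

end Aux

/-- the uniform-smoothed function
`g_Λ(x) = E_{ε ~ U[-1,1]ⁿ}[f(x + Λε)]` (with `Λ = diag(λ₁,…,λₙ)`, `λᵢ > 0`)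
is `(1/2)`-Lipschitz w.r.t. the norm `‖δ‖_{Λ,1} = ‖Λ⁻¹δ‖₁`. -/
theorem uniform_smoothing_half_lipschitz (n : ℕ)
    (lam : Fin n → ℝ) (hlam : ∀ i, 0 < lam i)
    (f : (Fin n → ℝ) → ℝ) (hf : Measurable f) (hf01 : ∀ v, f v ∈ Set.Icc (0:ℝ) 1)
    (gL : (Fin n → ℝ) → ℝ)
    (hgL : ∀ x, gL x = ((2 : ℝ) ^ n)⁻¹ *
      ∫ ε in Set.univ.pi (fun _ : Fin n => Set.Icc (-1 : ℝ) 1),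
        f (x + fun i => lam i * ε i)) :
    ∀ x y, |gL x - gL y| ≤ (1 / 2) * ∑ i, |(x i - y i) / lam i| := by
  have step' : ∀ (a : Fin n → ℝ) (i₀ : Fin n) (v : ℝ),
      |gL (Function.update a i₀ v) - gL a| ≤ (1/2) * |(v - a i₀) / lam i₀| := by
    intro a i₀ v
    set c : ℝ := (v - a i₀) / lam i₀ with hcdef
    have hlne : lam i₀ ≠ 0 := (hlam i₀).ne'
    have hv : v = a i₀ + lam i₀ * c := by
      rw [hcdef]; field_simp; ring
    rw [hgL, hgL, ← mul_sub, abs_mul, abs_of_nonneg (by positivity : (0:ℝ) ≤ ((2:ℝ)^n)⁻¹)]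
    have hb := step_bound (lam := lam) hf hf01 a i₀ c
    have hn : n ≠ 0 := fun h => (h ▸ i₀).elim0
    have hpow : (2:ℝ)^n = 2 * 2^(n-1) := by
      conv_lhs => rw [show n = (n-1) + 1 from (Nat.succ_pred_eq_of_pos (Nat.pos_of_ne_zero hn)).symm]
      rw [pow_succ]; ring
    calc ((2:ℝ)^n)⁻¹ *
          |(∫ ε in Set.univ.pi (fun _ : Fin n => Set.Icc (-1 : ℝ) 1),
              f (Function.update a i₀ v + fun i => lam i * ε i)) -
            ∫ ε in Set.univ.pi (fun _ : Fin n => Set.Icc (-1 : ℝ) 1),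
              f (a + fun i => lam i * ε i)|
        ≤ ((2:ℝ)^n)⁻¹ * (2 ^ (n-1) * |c|) := by
          apply mul_le_mul_of_nonneg_left _ (by positivity)
          rw [hv] at *
          exact hb
      _ = (1/2) * |c| := by
          rw [hpow]
          have h2 : (0:ℝ) < 2^(n-1) := by positivity
          field_simp
  have tele : ∀ (s : Finset (Fin n)) (x y : Fin n → ℝ), (∀ i ∉ s, x i = y i) →
      |gL x - gL y| ≤ (1/2) * ∑ i ∈ s, |(x i - y i) / lam i| := by
    intro s
    induction s using Finset.induction_on with
    | empty =>
        intro x y h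
        have hxy : x = y := funext fun i => h i (by simp)
        simp [hxy]
    | @insert i s hi ih =>
        intro x y hxy
        set y' := Function.update y i (x i) with hy'def
        have h1 : ∀ j ∉ s, x j = y' j := by
          intro j hj
          rcases eq_or_ne j i with rfl | hne
          · rw [hy'def, Function.update_self]
          · rw [hy'def, Function.update_of_ne hne]
            exact hxy j (by simp [hne, hj])
        have h2 : |gL y' - gL y| ≤ (1/2) * |(x i - y i) / lam i| := by
          simpa using step' y i (x i)
        calc |gL x - gL y| ≤ |gL x - gL y'| + |gL y' - gL y| := abs_sub_le _ _ _
          _ ≤ (1/2) * ∑ j ∈ s, |(x j - y' j) / lam j| + (1/2) * |(x i - y i) / lam i| :=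
              add_le_add (ih x y' h1) h2
          _ = (1/2) * ∑ j ∈ s, |(x j - y j) / lam j| + (1/2) * |(x i - y i) / lam i| := by
              congr 2
              apply Finset.sum_congr rfl
              intro j hj
              rw [hy'def, Function.update_of_ne (by rintro rfl; exact hi hj)]
          _ = (1/2) * ∑ j ∈ insert i s, |(x j - y j) / lam j| := by
              rw [Finset.sum_insert hi]; ring
  intro x y
  exact tele Finset.univ x y (fun i h => absurd (Finset.mem_univ i) h)
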